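/- Let z = x + i·y be a complex number with y ≠ 0 and z ≠ 1, and for n ≥ 1 define δ_n(z) = (y/(1−z)) · ( 2i·n^{-z}/(((n+1)/n)^{2iy} − 1) − i·(n+1)^{-z}·(((n+2)/(n+1))^{2iy} + 1)/(((n+2)/(n+1))^{2iy} − 1) + (n+1)^{-z}·(1−x)/y ). Suppose N ≥ 1 is such that for every n with 1 ≤ n ≤ N, neither y·ln((n+1)/n) nor y·ln((n+2)/(n+1)) is an integer multiple of π. Then ∑_{n=1}^{N} δ_n(z) = ∑_{n=2}^{N} n^{-z} + (1/(1−z)) · ( y·2^{−iy}/sin(y·ln 2) − y·(N+1)^{-z}·cos(y·ln((N+2)/(N+1)))/sin(y·ln((N+2)/(N+1))) + (1−x)·(N+1)^{-z} ). -/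

import Mathlib

open Filter

/-- The increment `δ_n(z)` of the radial-convergence construction, in closed complex form:
`δ_n(z) = (y/(1−z))·(2i·n^{-z}/(((n+1)/n)^{2iy} − 1)
  − i·(n+1)^{-z}·(((n+2)/(n+1))^{2iy} + 1)/(((n+2)/(n+1))^{2iy} − 1)
  + (n+1)^{-z}·(1−x)/y)` where `x = Re z`, `y = Im z`. -/
noncomputable def deltaC (z : ℂ) (n : ℕ) : ℂ :=
  ((z.im : ℂ) / (1 - z)) *
    (2 * Complex.I * (n : ℂ) ^ (-z) /
        (((((n : ℝ) + 1) / (n : ℝ) : ℝ) : ℂ) ^ (2 * Complex.I * (z.im : ℂ)) - 1) -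
      Complex.I * ((n : ℂ) + 1) ^ (-z) *
        (((((( n : ℝ) + 2) / ((n : ℝ) + 1) : ℝ) : ℂ) ^ (2 * Complex.I * (z.im : ℂ)) + 1) /
          (((((n : ℝ) + 2) / ((n : ℝ) + 1) : ℝ) : ℂ) ^ (2 * Complex.I * (z.im : ℂ)) - 1)) +
      ((n : ℂ) + 1) ^ (-z) * ((1 - z.re : ℝ) : ℂ) / (z.im : ℂ))

/-- The telescoping identity: for `z = x + i·y` with `y ≠ 0`, `z ≠ 1`, and `N ≥ 1` such
that for `1 ≤ n ≤ N` neither `y·ln((n+1)/n)` nor `y·ln((n+2)/(n+1))` is an integer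
multiple of `π`,
`∑_{n=1}^{N} δ_n(z) = ∑_{n=2}^{N} n^{-z} + (1/(1−z))·(y·2^{−iy}/sin(y·ln 2)
  − y·(N+1)^{-z}·cos(y·ln((N+2)/(N+1)))/sin(y·ln((N+2)/(N+1))) + (1−x)·(N+1)^{-z})`. -/
lemma sin_ne_zero_of_h {y t : ℝ} (h : ∀ k : ℤ, y * Real.log t ≠ k * Real.pi) :
    Real.sin (y * Real.log t) ≠ 0 := by
  intro hs
  rcases Real.sin_eq_zero_iff.mp hs with ⟨k, hk⟩
  exact h k hk.symm

lemma cpow_eq_exp {t : ℝ} (ht : 0 < t) (w : ℂ) :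
    (t : ℂ) ^ w = Complex.exp (w * (Real.log t : ℂ)) := by
  rw [Complex.cpow_def_of_ne_zero (by exact_mod_cast ht.ne'), ← Complex.ofReal_log ht.le, mul_comm]

lemma exp_two_sub_one (θ : ℝ) :
    Complex.exp (2 * Complex.I * θ) - 1
      = Complex.exp (Complex.I * θ) * (2 * Complex.I * Complex.sin θ) := by
  have hab : Complex.exp (Complex.I * θ) * Complex.exp (-(Complex.I * θ)) = 1 := by
    rw [← Complex.exp_add]; simp
  rw [show Complex.exp (2 * Complex.I * (θ:ℂ))
      = Complex.exp (Complex.I * θ) * Complex.exp (Complex.I * θ) by rw [← Complex.exp_add]; ring_nf,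
    Complex.sin,
    show ((θ:ℂ)) * Complex.I = Complex.I * θ from mul_comm _ _,
    show (-(θ:ℂ)) * Complex.I = -(Complex.I * θ) by ring]
  linear_combination hab + (Complex.exp (Complex.I * (θ:ℂ)) ^ 2 -
    Complex.exp (Complex.I * (θ:ℂ)) * Complex.exp (-(Complex.I * (θ:ℂ)))) * Complex.I_sq

lemma exp_two_add_one (θ : ℝ) :
    Complex.exp (2 * Complex.I * θ) + 1
      = Complex.exp (Complex.I * θ) * (2 * Complex.cos θ) := by
  have hab : Complex.exp (Complex.I * θ) * Complex.exp (-(Complex.I * θ)) = 1 := by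
    rw [← Complex.exp_add]; simp
  rw [show Complex.exp (2 * Complex.I * (θ:ℂ))
      = Complex.exp (Complex.I * θ) * Complex.exp (Complex.I * θ) by rw [← Complex.exp_add]; ring_nf,
    Complex.cos,
    show ((θ:ℂ)) * Complex.I = Complex.I * θ from mul_comm _ _,
    show (-(θ:ℂ)) * Complex.I = -(Complex.I * θ) by ring]
  linear_combination (-1 : ℂ) * hab

lemma closed_alg (w nz mz a1 a2 s1 s2 c2 u y : ℂ)
    (hs1 : s1 ≠ 0) (hs2 : s2 ≠ 0) (ha1 : a1 ≠ 0) (ha2 : a2 ≠ 0) :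
    w * (2 * Complex.I * nz / (a1 * (2 * Complex.I * s1))
      - Complex.I * mz * ((a2 * (2 * c2)) / (a2 * (2 * Complex.I * s2)))
      + mz * u / y)
    = w * (nz * a1⁻¹ / s1 - mz * (c2 / s2) + mz * u / y) := by
  have hI : Complex.I ≠ 0 := Complex.I_ne_zero
  have h1 : 2 * Complex.I * nz / (a1 * (2 * Complex.I * s1)) = nz * a1⁻¹ / s1 := by
    field_simp
  have h2 : Complex.I * mz * ((a2 * (2 * c2)) / (a2 * (2 * Complex.I * s2))) = mz * (c2 / s2) := by
    rw [mul_comm Complex.I mz, mul_assoc]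
    congr 1
    field_simp
  rw [h1, h2]

lemma deltaC_closed (z : ℂ) (n : ℕ) (hn : 1 ≤ n)
    (h1 : Real.sin (z.im * Real.log (((n:ℝ)+1)/(n:ℝ))) ≠ 0)
    (h2 : Real.sin (z.im * Real.log (((n:ℝ)+2)/((n:ℝ)+1))) ≠ 0) :
    deltaC z n = ((z.im:ℂ)/(1-z)) *
      ( (n:ℂ)^(-z) * Complex.exp (-(Complex.I * ((z.im * Real.log (((n:ℝ)+1)/(n:ℝ)) : ℝ) : ℂ)))
          / ((Real.sin (z.im * Real.log (((n:ℝ)+1)/(n:ℝ))) : ℝ) : ℂ)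
        - ((n:ℂ)+1)^(-z) * (((Real.cos (z.im * Real.log (((n:ℝ)+2)/((n:ℝ)+1))) : ℝ) : ℂ)
            / ((Real.sin (z.im * Real.log (((n:ℝ)+2)/((n:ℝ)+1))) : ℝ) : ℂ))
        + ((n:ℂ)+1)^(-z) * ((1 - z.re : ℝ) : ℂ) / (z.im:ℂ) ) := by
  have hn0 : (0:ℝ) < (n:ℝ) := by exact_mod_cast hn
  have ht1 : (0:ℝ) < ((n:ℝ)+1)/(n:ℝ) := by positivity
  have ht2 : (0:ℝ) < ((n:ℝ)+2)/((n:ℝ)+1) := by positivity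
  set θ1 : ℝ := z.im * Real.log (((n:ℝ)+1)/(n:ℝ)) with hθ1
  set θ2 : ℝ := z.im * Real.log (((n:ℝ)+2)/((n:ℝ)+1)) with hθ2
  have e1 : ((((n:ℝ)+1)/(n:ℝ) : ℝ) : ℂ) ^ (2 * Complex.I * (z.im : ℂ))
      = Complex.exp (2 * Complex.I * (θ1 : ℂ)) := by
    rw [cpow_eq_exp ht1]; congr 1; push_cast [hθ1]; ring
  have e2 : ((((n:ℝ)+2)/((n:ℝ)+1) : ℝ) : ℂ) ^ (2 * Complex.I * (z.im : ℂ))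
      = Complex.exp (2 * Complex.I * (θ2 : ℂ)) := by
    rw [cpow_eq_exp ht2]; congr 1; push_cast [hθ2]; ring
  rw [deltaC, e1, e2, exp_two_sub_one, exp_two_add_one,
    show Complex.exp (2 * Complex.I * (θ2:ℂ)) - 1
      = Complex.exp (Complex.I * θ2) * (2 * Complex.I * Complex.sin θ2) from exp_two_sub_one θ2]
  have hinv : Complex.exp (-(Complex.I * (θ1:ℂ))) = (Complex.exp (Complex.I * (θ1:ℂ)))⁻¹ :=
    Complex.exp_neg _
  rw [← Complex.ofReal_sin, ← Complex.ofReal_sin, ← Complex.ofReal_cos, hinv]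
  exact closed_alg _ _ _ _ _ _ _ _ _ _
    (Complex.ofReal_ne_zero.mpr h1) (Complex.ofReal_ne_zero.mpr h2)
    (Complex.exp_ne_zero _) (Complex.exp_ne_zero _)

theorem deltaC_telescoping (z : ℂ) (hy : z.im ≠ 0) (hz : z ≠ 1) (N : ℕ) (hN : 1 ≤ N)
    (h : ∀ n : ℕ, 1 ≤ n → n ≤ N →
      (∀ k : ℤ, z.im * Real.log (((n : ℝ) + 1) / (n : ℝ)) ≠ k * Real.pi) ∧
      (∀ k : ℤ, z.im * Real.log (((n : ℝ) + 2) / ((n : ℝ) + 1)) ≠ k * Real.pi)) :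
    ∑ n ∈ Finset.Icc 1 N, deltaC z n =
      ∑ n ∈ Finset.Icc 2 N, (n : ℂ) ^ (-z) +
        (1 / (1 - z)) *
          ((z.im : ℂ) * (2 : ℂ) ^ (-(Complex.I * (z.im : ℂ))) /
              ((Real.sin (z.im * Real.log 2) : ℝ) : ℂ) -
            (z.im : ℂ) * ((N : ℂ) + 1) ^ (-z) *
              (((Real.cos (z.im * Real.log (((N : ℝ) + 2) / ((N : ℝ) + 1))) : ℝ) : ℂ) /
                ((Real.sin (z.im * Real.log (((N : ℝ) + 2) / ((N : ℝ) + 1))) : ℝ) : ℂ)) +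
            ((1 - z.re : ℝ) : ℂ) * ((N : ℂ) + 1) ^ (-z)) := by
  have hz1 : (1:ℂ) - z ≠ 0 := sub_ne_zero.mpr (Ne.symm hz)
  have hyC : (z.im:ℂ) ≠ 0 := Complex.ofReal_ne_zero.mpr hy
  have hzsplit : (1:ℂ) - z = ((1 - z.re : ℝ):ℂ) - Complex.I * (z.im:ℂ) := by
    apply Complex.ext <;> simp
  revert h
  induction N, hN using Nat.le_induction with
  | base =>
    intro h
    obtain ⟨hb1, hb2⟩ := h 1 le_rfl le_rfl
    have hs1 := sin_ne_zero_of_h hb1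
    have hs2 := sin_ne_zero_of_h hb2
    rw [Finset.Icc_self, Finset.sum_singleton, deltaC_closed z 1 le_rfl hs1 hs2,
        show Finset.Icc 2 1 = (∅ : Finset ℕ) from Finset.Icc_eq_empty (by omega), Finset.sum_empty]
    have e2 : (2:ℂ)^(-(Complex.I * (z.im:ℂ)))
        = Complex.exp (-(Complex.I * ((z.im * Real.log 2 : ℝ):ℂ))) := by
      rw [show (2:ℂ) = ((2:ℝ):ℂ) by norm_num, cpow_eq_exp (by norm_num : (0:ℝ) < 2)]
      congr 1; push_cast; ring
    rw [e2]
    norm_num at hs1 hs2 ⊢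
    have hs1C : ((Real.sin (z.im * Real.log 2) : ℝ):ℂ) ≠ 0 := Complex.ofReal_ne_zero.mpr hs1
    have hs2C : ((Real.sin (z.im * Real.log (3/2)) : ℝ):ℂ) ≠ 0 := Complex.ofReal_ne_zero.mpr hs2
    field_simp
  | succ N hN ih =>
    intro h
    obtain ⟨hb1, hb2⟩ := h (N+1) (by omega) le_rfl
    have hs1 := sin_ne_zero_of_h hb1
    have hs2 := sin_ne_zero_of_h hb2
    rw [Finset.sum_Icc_succ_top (by omega : 1 ≤ N+1), ih (fun n h1 h2 => h n h1 (by omega)),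
        deltaC_closed z (N+1) (by omega) hs1 hs2,
        Finset.sum_Icc_succ_top (by omega : 2 ≤ N+1)]
    rw [show ((N+1:ℕ):ℝ) = (N:ℝ)+1 by push_cast; ring] at hs1 hs2 ⊢
    rw [show ((N+1:ℕ):ℂ) = (N:ℂ)+1 by push_cast; ring]
    rw [show (N:ℝ)+1+1 = (N:ℝ)+2 by ring] at hs1 hs2 ⊢
    have hlog2 : Real.sin (z.im * Real.log 2) ≠ 0 := by
      have := sin_ne_zero_of_h (h 1 (by omega) (by omega)).1
      norm_num at this
      exact this
    have hE : Complex.exp (-(Complex.I * ((z.im * Real.log (((N:ℝ)+2)/((N:ℝ)+1)) : ℝ):ℂ)))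
        = ((Real.cos (z.im * Real.log (((N:ℝ)+2)/((N:ℝ)+1))) : ℝ):ℂ)
          - Complex.I * ((Real.sin (z.im * Real.log (((N:ℝ)+2)/((N:ℝ)+1))) : ℝ):ℂ) := by
      rw [show -(Complex.I * ((z.im * Real.log (((N:ℝ)+2)/((N:ℝ)+1)) : ℝ):ℂ))
          = ((-(z.im * Real.log (((N:ℝ)+2)/((N:ℝ)+1))) : ℝ):ℂ) * Complex.I by push_cast; ring,
        Complex.exp_mul_I, Complex.ofReal_neg, Complex.cos_neg, Complex.sin_neg,
        ← Complex.ofReal_cos, ← Complex.ofReal_sin]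
      ring
    rw [hE, hzsplit]
    have hs1C := Complex.ofReal_ne_zero.mpr hs1
    have hs2C := Complex.ofReal_ne_zero.mpr hs2
    have hlog2C := Complex.ofReal_ne_zero.mpr hlog2
    have hwC : ((1 - z.re : ℝ):ℂ) - Complex.I * (z.im:ℂ) ≠ 0 := by rw [← hzsplit]; exact hz1
    clear hE hzsplit ih h hb1 hb2 hs1 hs2 hlog2 hz1 hy hz hN
    generalize (((Real.sin (z.im * Real.log (((N:ℝ)+2)/((N:ℝ)+1))) : ℝ):ℂ)) = sb at hs1C ⊢
    generalize (((Real.cos (z.im * Real.log (((N:ℝ)+2)/((N:ℝ)+1))) : ℝ):ℂ)) = cb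
    generalize (((Real.sin (z.im * Real.log (((N:ℝ)+1+2)/((N:ℝ)+2))) : ℝ):ℂ)) = s2v at hs2C ⊢
    generalize (((Real.cos (z.im * Real.log (((N:ℝ)+1+2)/((N:ℝ)+2))) : ℝ):ℂ)) = c2v
    generalize (((Real.sin (z.im * Real.log 2) : ℝ):ℂ)) = sL at hlog2C ⊢
    generalize (((1 - z.re : ℝ):ℂ)) = u at hwC ⊢
    generalize ((z.im:ℝ):ℂ) = yv at hyC hwC ⊢
    generalize ((2:ℂ) ^ (-(Complex.I * yv))) = t2
    generalize (((N:ℂ)+1) ^ (-z)) = m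
    generalize (((N:ℂ)+1+1) ^ (-z)) = p
    generalize (∑ n ∈ Finset.Icc 2 N, (n:ℂ) ^ (-z)) = S
    rw [show m * (cb - Complex.I * sb) / sb = m * (cb / sb) - Complex.I * m from by
      field_simp]
    generalize (cb / sb) = r
    generalize (c2v / s2v) = q
    generalize (yv * t2 / sL) = T
    field_simp
    ring
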